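/- (Regret of Sleeping CB) In the Sleeping CB setup with arbitrary real betting amounts w_{t,i}, let S_{T,i} = ∑_{t=1}^T I_{t,i} and suppose S_{T,i} ≥ 1 for all i. Suppose there exist real numbers F_i > 0, constants c1 > 0 and c_{2,i} ∈ ℝ such that for every i: (a) F_i ≤ 1 + ∑_{t=1}^T z_{t,i} w_{t,i}, and (b) ln F_i ≥ c1·(∑_{t=1}^T z_{t,i})²/S_{T,i} + c_{2,i}. Then for every u in the probability simplex Δ^N with π_i > 0 whenever u_i > 0, the regret satisfies Regret_T(u) ≤ sqrt( (1/c1) · (∑_{i=1}^N u_i S_{T,i}) · ( KL(u‖π) − ∑_{i=1}^N u_i c_{2,i} ) ). -/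

import Mathlib

open Finset

/-- Theorem 1 (Regret of Sleeping CB): in the Sleeping CB setup with arbitrary real
betting amounts `w`, if each potential value `F i` lower-bounds the wealth of expert `i`
and `log (F i) ≥ c1 (∑_t z_{t,i})² / S_{T,i} + c2 i`, then the sleeping-experts regret
with respect to any `u` in the simplex is bounded by
`sqrt((1/c1) (∑_i u_i S_{T,i}) (KL(u‖π) − ∑_i u_i c2_i))`. -/
theorem sleeping_cb_regret
    (N T : ℕ)
    (π u : Fin N → ℝ)
    (hπ0 : ∀ i, 0 ≤ π i) (hπ1 : ∑ i, π i = 1)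
    (hu0 : ∀ i, 0 ≤ u i) (hu1 : ∑ i, u i = 1)
    (hsupp : ∀ i, 0 < u i → 0 < π i)
    (ℓ Ind w p g z : Fin T → Fin N → ℝ)
    (hℓ : ∀ t i, ℓ t i ∈ Set.Icc (0:ℝ) 1)
    (hInd : ∀ t i, Ind t i = 0 ∨ Ind t i = 1)
    (hawake : ∀ t, ∃ i, Ind t i = 1 ∧ 0 < π i)
    (hp : ∀ t i, p t i =
      if 0 < ∑ j, π j * Ind t j * max (w t j) 0
      then (π i * Ind t i * max (w t i) 0) / ∑ j, π j * Ind t j * max (w t j) 0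
      else (π i * Ind t i) / ∑ j, π j * Ind t j)
    (h : Fin T → ℝ)
    (hh : ∀ t, h t = ∑ i, Ind t i * p t i * ℓ t i)
    (hg : ∀ t i, g t i = if 0 < w t i then h t - ℓ t i else max (h t - ℓ t i) 0)
    (hz : ∀ t i, z t i = Ind t i * g t i)
    (S : Fin N → ℝ) (hS : ∀ i, S i = ∑ t, Ind t i) (hS1 : ∀ i, 1 ≤ S i)
    (F : Fin N → ℝ) (hF : ∀ i, 0 < F i)
    (c1 : ℝ) (hc1 : 0 < c1) (c2 : Fin N → ℝ)
    (hwealth : ∀ i, F i ≤ 1 + ∑ t, z t i * w t i)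
    (hpot : ∀ i, c1 * (∑ t, z t i) ^ 2 / S i + c2 i ≤ Real.log (F i)) :
    ∑ t, ∑ i, Ind t i * u i * (h t - ℓ t i)
      ≤ Real.sqrt ((1 / c1) * (∑ i, u i * S i) *
          ((∑ i, u i * Real.log (u i / π i)) - ∑ i, u i * c2 i)) := by
  have hInd0 : ∀ t i, 0 ≤ Ind t i := by
    intro t i; rcases hInd t i with h' | h' <;> simp [h']
  -- Step 1: per-round, the π-weighted bet payoff is nonpositive
  have step1 : ∀ t, ∑ i, π i * (z t i * w t i) ≤ 0 := by
    intro t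
    set W : ℝ := ∑ j, π j * Ind t j * max (w t j) 0 with hW
    have hterm : ∀ i, π i * (z t i * w t i)
        ≤ (π i * Ind t i * max (w t i) 0) * (h t - ℓ t i) := by
      intro i
      by_cases hw : 0 < w t i
      · have : max (w t i) 0 = w t i := max_eq_left hw.le
        rw [this, hz, hg]
        simp only [if_pos hw]; exact le_of_eq (by ring)
      · have hmax : max (w t i) 0 = 0 := max_eq_right (not_lt.mp hw)
        rw [hmax, hz, hg]
        simp only [if_neg hw]
        have h1 : π i * (Ind t i * max (h t - ℓ t i) 0 * w t i) ≤ 0 := by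
          have : 0 ≤ π i * (Ind t i * max (h t - ℓ t i) 0) :=
            mul_nonneg (hπ0 i) (mul_nonneg (hInd0 t i) (le_max_right _ _))
          nlinarith [not_lt.mp hw]
        nlinarith
    have hsum0 : ∑ i, (π i * Ind t i * max (w t i) 0) * (h t - ℓ t i) = 0 := by
      by_cases hWpos : 0 < W
      · have hpf : ∀ i, p t i = (π i * Ind t i * max (w t i) 0) / W := by
          intro i; rw [hp, if_pos (by rw [← hW]; exact hWpos), hW]
        have hip : ∀ i, Ind t i * p t i = p t i := by
          intro i
          rcases hInd t i with h' | h'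
          · rw [hpf, h']; ring
          · rw [h', one_mul]
        have hpl : ∑ i, p t i * ℓ t i = h t := by
          rw [hh]
          exact Finset.sum_congr rfl fun i _ => by rw [hip i]
        have hps : ∑ i, p t i = 1 := by
          rw [funext hpf]
          rw [← Finset.sum_div]
          exact div_self (ne_of_gt hWpos)
        have : ∀ i, (π i * Ind t i * max (w t i) 0) * (h t - ℓ t i)
            = W * (p t i * (h t - ℓ t i)) := by
          intro i; rw [hpf]; field_simp
        rw [funext this] at *
        rw [← Finset.mul_sum]
        have : ∑ i, p t i * (h t - ℓ t i) = 0 := by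
          have : ∑ i, p t i * (h t - ℓ t i) = (∑ i, p t i) * h t - ∑ i, p t i * ℓ t i := by
            rw [Finset.sum_mul, ← Finset.sum_sub_distrib]
            exact Finset.sum_congr rfl fun i _ => by ring
          rw [this, hps, hpl]; ring
        rw [this, mul_zero]
      · have hterm0 : ∀ i ∈ Finset.univ, π i * Ind t i * max (w t i) 0 = 0 := by
          have hnn : ∀ i ∈ (Finset.univ : Finset (Fin N)),
              0 ≤ π i * Ind t i * max (w t i) 0 := fun i _ =>
            mul_nonneg (mul_nonneg (hπ0 i) (hInd0 t i)) (le_max_right _ _)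
          have : W = 0 := le_antisymm (not_lt.mp hWpos) (Finset.sum_nonneg hnn)
          exact (Finset.sum_eq_zero_iff_of_nonneg hnn).mp this
        exact Finset.sum_eq_zero fun i _ => by rw [hterm0 i (Finset.mem_univ i), zero_mul]
    calc ∑ i, π i * (z t i * w t i)
        ≤ ∑ i, (π i * Ind t i * max (w t i) 0) * (h t - ℓ t i) :=
          Finset.sum_le_sum fun i _ => hterm i
      _ = 0 := hsum0
  -- Step 2: total π-weighted wealth increment is nonpositive
  have step2 : ∑ i, π i * ∑ t, z t i * w t i ≤ 0 := by
    have : ∑ i, π i * ∑ t, z t i * w t i = ∑ t, ∑ i, π i * (z t i * w t i) := by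
      rw [Finset.sum_comm]
      exact Finset.sum_congr rfl fun i _ => Finset.mul_sum _ _ _
    rw [this]
    exact Finset.sum_nonpos fun t _ => step1 t
  -- Step 3: ∑ π F ≤ 1
  have step3 : ∑ i, π i * F i ≤ 1 := by
    calc ∑ i, π i * F i
        ≤ ∑ i, π i * (1 + ∑ t, z t i * w t i) :=
          Finset.sum_le_sum fun i _ => mul_le_mul_of_nonneg_left (hwealth i) (hπ0 i)
      _ = (∑ i, π i) + ∑ i, π i * ∑ t, z t i * w t i := by
          rw [← Finset.sum_add_distrib]
          exact Finset.sum_congr rfl fun i _ => by ring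
      _ ≤ 1 + 0 := add_le_add (le_of_eq hπ1) step2
      _ = 1 := by ring
  -- Step 4: Jensen: ∑ u log F ≤ KL(u‖π)
  have step4 : ∑ i, u i * Real.log (F i) ≤ ∑ i, u i * Real.log (u i / π i) := by
    set s : Finset (Fin N) := Finset.univ.filter (fun i => 0 < u i) with hs
    have hmem : ∀ i ∈ s, 0 < u i := fun i hi => (Finset.mem_filter.mp hi).2
    have hzero : ∀ i ∈ Finset.univ, i ∉ s → u i = 0 := by
      intro i _ hi
      by_contra hne
      exact hi (Finset.mem_filter.mpr ⟨Finset.mem_univ i, (hu0 i).lt_of_ne (Ne.symm hne)⟩)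
    have husum : ∑ i ∈ s, u i = 1 := by
      rw [← hu1]
      exact Finset.sum_subset (Finset.filter_subset _ _)
        (fun i h1 h2 => hzero i h1 h2)
    have hπFnonneg : ∀ i ∈ Finset.univ, 0 ≤ π i * F i := fun i _ =>
      mul_nonneg (hπ0 i) (hF i).le
    have hpos_s : ∀ i ∈ s, 0 < π i * F i := fun i hi =>
      mul_pos (hsupp i (hmem i hi)) (hF i)
    have jensen : ∑ i ∈ s, u i • Real.log (π i * F i / u i)
        ≤ Real.log (∑ i ∈ s, u i • (π i * F i / u i)) := by
      apply ConcaveOn.le_map_sum (strictConcaveOn_log_Ioi.concaveOn)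
        (fun i hi => (hmem i hi).le) husum
      intro i hi
      exact Set.mem_Ioi.mpr (div_pos (hpos_s i hi) (hmem i hi))
    have hsum_eq : ∑ i ∈ s, u i • (π i * F i / u i) = ∑ i ∈ s, π i * F i := by
      refine Finset.sum_congr rfl fun i hi => ?_
      rw [smul_eq_mul, mul_div_cancel₀ _ (ne_of_gt (hmem i hi))]
    have hsle1 : ∑ i ∈ s, π i * F i ≤ 1 := by
      refine le_trans ?_ step3
      exact Finset.sum_le_sum_of_subset_of_nonneg (Finset.filter_subset _ _)
        (fun i h1 _ => hπFnonneg i h1)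
    have hsnn : 0 ≤ ∑ i ∈ s, π i * F i :=
      Finset.sum_nonneg fun i hi => (hpos_s i hi).le
    have hlog_le : Real.log (∑ i ∈ s, π i * F i) ≤ 0 := Real.log_nonpos hsnn hsle1
    have key : ∑ i ∈ s, u i * Real.log (π i * F i / u i) ≤ 0 := by
      calc ∑ i ∈ s, u i * Real.log (π i * F i / u i)
          = ∑ i ∈ s, u i • Real.log (π i * F i / u i) := by
            exact Finset.sum_congr rfl fun i _ => by rw [smul_eq_mul]
        _ ≤ Real.log (∑ i ∈ s, u i • (π i * F i / u i)) := jensen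
        _ = Real.log (∑ i ∈ s, π i * F i) := by rw [hsum_eq]
        _ ≤ 0 := hlog_le
    have hsplit : ∀ i ∈ s, u i * Real.log (π i * F i / u i)
        = u i * Real.log (F i) - u i * Real.log (u i / π i) := by
      intro i hi
      have hui : u i ≠ 0 := ne_of_gt (hmem i hi)
      have hπi : π i ≠ 0 := ne_of_gt (hsupp i (hmem i hi))
      have hFi : F i ≠ 0 := ne_of_gt (hF i)
      rw [Real.log_div (mul_pos (hsupp i (hmem i hi)) (hF i)).ne' hui, Real.log_mul hπi hFi,
        Real.log_div hui hπi]
      ring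
    have keysum : ∑ i ∈ s, u i * Real.log (F i) ≤ ∑ i ∈ s, u i * Real.log (u i / π i) := by
      have := key
      rw [Finset.sum_congr rfl hsplit, Finset.sum_sub_distrib] at this
      linarith
    have e1 : ∑ i, u i * Real.log (F i) = ∑ i ∈ s, u i * Real.log (F i) :=
      (Finset.sum_subset (Finset.filter_subset _ _)
        (fun i h1 h2 => by rw [hzero i h1 h2, zero_mul])).symm
    have e2 : ∑ i, u i * Real.log (u i / π i) = ∑ i ∈ s, u i * Real.log (u i / π i) :=
      (Finset.sum_subset (Finset.filter_subset _ _)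
        (fun i h1 h2 => by rw [hzero i h1 h2, zero_mul])).symm
    rw [e1, e2]; exact keysum
  -- Abbreviations
  set R : Fin N → ℝ := fun i => ∑ t, z t i with hR
  set KL : ℝ := ∑ i, u i * Real.log (u i / π i) with hKL
  set D : ℝ := KL - ∑ i, u i * c2 i with hD
  have hSpos : ∀ i, 0 < S i := fun i => lt_of_lt_of_le one_pos (hS1 i)
  -- Step 5: c1 * ∑ u R²/S ≤ D
  have step5 : c1 * ∑ i, u i * (R i ^ 2 / S i) ≤ D := by
    have h1 : ∑ i, u i * (c1 * R i ^ 2 / S i + c2 i) ≤ ∑ i, u i * Real.log (F i) :=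
      Finset.sum_le_sum fun i _ => mul_le_mul_of_nonneg_left (hpot i) (hu0 i)
    have h2 : ∑ i, u i * (c1 * R i ^ 2 / S i + c2 i)
        = c1 * (∑ i, u i * (R i ^ 2 / S i)) + ∑ i, u i * c2 i := by
      rw [Finset.mul_sum, ← Finset.sum_add_distrib]
      exact Finset.sum_congr rfl fun i _ => by ring
    rw [h2] at h1
    have := le_trans h1 step4
    rw [hD]; linarith
  have hQnn : 0 ≤ ∑ i, u i * (R i ^ 2 / S i) :=
    Finset.sum_nonneg fun i _ => mul_nonneg (hu0 i) (div_nonneg (sq_nonneg _) (hSpos i).le)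
  have hDnn : 0 ≤ D := le_trans (by positivity) step5
  -- Step 6: regret ≤ ∑ u R
  have step6 : ∑ t, ∑ i, Ind t i * u i * (h t - ℓ t i) ≤ ∑ i, u i * R i := by
    rw [Finset.sum_comm]
    apply Finset.sum_le_sum
    intro i _
    have : u i * R i = ∑ t, u i * z t i := by rw [hR, Finset.mul_sum]
    rw [this]
    apply Finset.sum_le_sum
    intro t _
    rw [hz, hg]
    by_cases hw : 0 < w t i
    · simp only [if_pos hw]; exact le_of_eq (by ring)
    · simp only [if_neg hw]
      have h1 : Ind t i * (h t - ℓ t i) ≤ Ind t i * max (h t - ℓ t i) 0 :=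
        mul_le_mul_of_nonneg_left (le_max_left _ _) (hInd0 t i)
      nlinarith [hu0 i]
  -- Step 7: Cauchy-Schwarz
  set A : ℝ := ∑ i, u i * S i with hA
  have hAnn : 0 ≤ A := Finset.sum_nonneg fun i _ =>
    mul_nonneg (hu0 i) (hSpos i).le
  have hCS : (∑ i, u i * R i) ^ 2 ≤ A * ∑ i, u i * (R i ^ 2 / S i) := by
    have := Finset.sum_mul_sq_le_sq_mul_sq Finset.univ
      (fun i => Real.sqrt (u i * S i)) (fun i => Real.sqrt (u i / S i) * R i)
    have e1 : ∀ i, Real.sqrt (u i * S i) * (Real.sqrt (u i / S i) * R i) = u i * R i := by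
      intro i
      rw [← mul_assoc, ← Real.sqrt_mul (mul_nonneg (hu0 i) (hSpos i).le)]
      have hS0 : S i ≠ 0 := (hSpos i).ne'
      have : u i * S i * (u i / S i) = u i ^ 2 * (S i / S i) := by ring
      rw [this, div_self hS0, mul_one, Real.sqrt_sq (hu0 i)]
    have e2 : ∀ i, Real.sqrt (u i * S i) ^ 2 = u i * S i := fun i =>
      Real.sq_sqrt (mul_nonneg (hu0 i) (hSpos i).le)
    have e3 : ∀ i, (Real.sqrt (u i / S i) * R i) ^ 2 = u i * (R i ^ 2 / S i) := by
      intro i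
      rw [mul_pow, Real.sq_sqrt (div_nonneg (hu0 i) (hSpos i).le)]
      ring
    calc (∑ i, u i * R i) ^ 2
        = (∑ i, Real.sqrt (u i * S i) * (Real.sqrt (u i / S i) * R i)) ^ 2 := by
          rw [Finset.sum_congr rfl fun i _ => (e1 i).symm]
      _ ≤ (∑ i, Real.sqrt (u i * S i) ^ 2) * ∑ i, (Real.sqrt (u i / S i) * R i) ^ 2 := this
      _ = A * ∑ i, u i * (R i ^ 2 / S i) := by
          rw [Finset.sum_congr rfl fun i _ => e2 i, Finset.sum_congr rfl fun i _ => e3 i]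
  -- Combine
  have hQle : ∑ i, u i * (R i ^ 2 / S i) ≤ (1 / c1) * D := by
    rw [one_div, inv_mul_eq_div, le_div_iff₀ hc1, mul_comm]
    exact step5
  have hsq : (∑ i, u i * R i) ^ 2 ≤ (1 / c1) * A * D := by
    calc (∑ i, u i * R i) ^ 2 ≤ A * ∑ i, u i * (R i ^ 2 / S i) := hCS
      _ ≤ A * ((1 / c1) * D) := mul_le_mul_of_nonneg_left hQle hAnn
      _ = (1 / c1) * A * D := by ring
  calc ∑ t, ∑ i, Ind t i * u i * (h t - ℓ t i)
      ≤ ∑ i, u i * R i := step6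
    _ ≤ Real.sqrt ((∑ i, u i * R i) ^ 2) := by
        rw [Real.sqrt_sq_eq_abs]; exact le_abs_self _
    _ ≤ Real.sqrt ((1 / c1) * A * D) := Real.sqrt_le_sqrt hsq
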